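/- (Case (a) of the max-cost analysis.) Consider a facility-location instance with |N₁| ≥ |N₂|, and let (w₁,w₂) be the output of the Conditional-Median mechanism. Then for every feasible solution (y₁,y₂) and every agent i ∈ N₁, |x_i − w₁| ≤ 3 · MC(y₁,y₂). -/

import Mathlib

open Finset

/-- The smallest element of `C` minimizing the distance to `p`. -/
noncomputable def tloc (C : Finset ℝ) (p : ℝ) : ℝ :=
  WithTop.untopD 0 (C.filter fun c => ∀ c' ∈ C, |p - c| ≤ |p - c'|).min

/-- The smallest element of `C \ {tloc C p}` minimizing the distance to `p`. -/
noncomputable def sloc (C : Finset ℝ) (p : ℝ) : ℝ :=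
  tloc (C.erase (tloc C p)) p

/-- The `⌈n/2⌉`-th smallest element of a multiset of reals (0 if empty). -/
noncomputable def medOf (l : Multiset ℝ) : ℝ :=
  (l.sort (· ≤ ·)).getD ((Multiset.card l + 1) / 2 - 1) 0

/-- The median position of the agents in `S` with positions `x`. -/
noncomputable def medianPos (S : Finset ℕ) (x : ℕ → ℝ) : ℝ :=
  medOf (S.val.map x)

/-- The Conditional-Median mechanism, assuming facility 1 is (weakly) more popular. -/
noncomputable def condMedian (x : ℕ → ℝ) (N1 N2 : Finset ℕ) (C : Finset ℝ) : ℝ × ℝ :=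
  if (N1 ∩ N2).card ≤ (N1 \ N2).card then
    let m1 := medianPos (N1 \ N2) x
    let m2 := medianPos N2 x
    let w1 := tloc C m1
    (w1, if tloc C m2 ≠ w1 then tloc C m2 else sloc C m2)
  else
    let m12 := medianPos (N1 ∩ N2) x
    (tloc C m12, sloc C m12)

/-- The output of the Conditional-Median mechanism (roles swapped if `|N₂| > |N₁|`). -/
noncomputable def mechOutput (x : ℕ → ℝ) (N1 N2 : Finset ℕ) (C : Finset ℝ) : ℝ × ℝ :=
  if N2.card ≤ N1.card then condMedian x N1 N2 C
  else (condMedian x N2 N1 C).swap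

/-- The cost of agent `i` at solution `y`: the distance to the farthest approved facility. -/
noncomputable def cost (x : ℕ → ℝ) (N1 N2 : Finset ℕ) (i : ℕ) (y : ℝ × ℝ) : ℝ :=
  if i ∈ N1 then
    if i ∈ N2 then max |x i - y.1| |x i - y.2| else |x i - y.1|
  else |x i - y.2|

/-- The social cost. -/
noncomputable def SC (x : ℕ → ℝ) (N1 N2 N : Finset ℕ) (y : ℝ × ℝ) : ℝ :=
  ∑ i ∈ N, cost x N1 N2 i y

/-- The max cost. -/
noncomputable def MC (x : ℕ → ℝ) (N1 N2 N : Finset ℕ) (hN : N.Nonempty) (y : ℝ × ℝ) : ℝ :=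
  N.sup' hN fun i => cost x N1 N2 i y

lemma tloc_spec (C : Finset ℝ) (p : ℝ) (hC : C.Nonempty) :
    tloc C p ∈ C ∧ ∀ c ∈ C, |p - tloc C p| ≤ |p - c| := by
  obtain ⟨c0, hc0, hmin⟩ := C.exists_min_image (fun c => |p - c|) hC
  set F := C.filter fun c => ∀ c' ∈ C, |p - c| ≤ |p - c'| with hF
  have hFne : F.Nonempty := ⟨c0, by simp only [hF, Finset.mem_filter]; exact ⟨hc0, hmin⟩⟩
  have hmem : F.min' hFne ∈ F := F.min'_mem hFne
  have heq : tloc C p = F.min' hFne := by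
    rw [tloc, ← hF, ← Finset.coe_min' hFne, WithTop.untopD_coe]
  rw [heq]
  simpa [hF, Finset.mem_filter] using hmem

lemma medOf_mem (l : Multiset ℝ) (hl : l ≠ 0) : medOf l ∈ l := by
  have hcard : 0 < Multiset.card l := Multiset.card_pos.mpr hl
  have hlen : (l.sort (· ≤ ·)).length = Multiset.card l := Multiset.length_sort _
  have hidx : (Multiset.card l + 1) / 2 - 1 < (l.sort (· ≤ ·)).length := by
    rw [hlen]; omega
  rw [medOf, List.getD_eq_getElem (l.sort (· ≤ ·)) 0 hidx]
  have hm : (l.sort (· ≤ ·))[(Multiset.card l + 1) / 2 - 1] ∈ l.sort (· ≤ ·) :=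
    List.getElem_mem _
  rwa [Multiset.mem_sort] at hm

/-- Case (a) of the max-cost analysis: every agent approving `F₁` is within three times
the optimal max cost from the location where the mechanism places `F₁`. -/
theorem maxCost_case_a
    (N N1 N2 : Finset ℕ) (x : ℕ → ℝ) (C : Finset ℝ)
    (hN : N.Nonempty) (h1 : N1.Nonempty) (h2 : N2.Nonempty)
    (hU : N1 ∪ N2 = N) (hC : 2 ≤ C.card)
    (hcards : N2.card ≤ N1.card)
    (y1 y2 : ℝ) (hy1 : y1 ∈ C) (hy2 : y2 ∈ C) (hy : y1 ≠ y2)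
    (i : ℕ) (hi : i ∈ N1) :
    |x i - (mechOutput x N1 N2 C).1| ≤ 3 * MC x N1 N2 N hN (y1, y2) := by
  have hiN : i ∈ N := by rw [← hU]; exact Finset.mem_union_left _ hi
  have hCne : C.Nonempty := Finset.card_pos.mp (by omega)
  have hb : ∀ j ∈ N1, |x j - y1| ≤ MC x N1 N2 N hN (y1, y2) := by
    intro j hj
    have hjN : j ∈ N := by rw [← hU]; exact Finset.mem_union_left _ hj
    have hc : |x j - y1| ≤ cost x N1 N2 j (y1, y2) := by
      by_cases hj2 : j ∈ N2 <;> simp [cost, hj, hj2, le_max_left]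
    rw [MC]
    exact hc.trans (Finset.le_sup' (f := fun k => cost x N1 N2 k (y1, y2)) hjN)
  have main : ∀ S : Finset ℕ, S.Nonempty → (∀ j ∈ S, j ∈ N1) →
      |x i - tloc C (medianPos S x)| ≤ 3 * MC x N1 N2 N hN (y1, y2) := by
    intro S hS hS1
    have hmm : medianPos S x ∈ S.val.map x := by
      apply medOf_mem
      simp only [ne_eq, Multiset.map_eq_zero]
      exact fun h => hS.ne_empty (Finset.val_eq_zero.mp h)
    obtain ⟨j, hjS, hjx⟩ := Multiset.mem_map.mp hmm
    have hj1 : j ∈ N1 := hS1 j hjS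
    obtain ⟨htC, hts⟩ := tloc_spec C (medianPos S x) hCne
    set m := medianPos S x with hm
    set w := tloc C m with hw
    have h1 : |x i - y1| ≤ MC x N1 N2 N hN (y1, y2) := hb i hi
    have h2 : |y1 - m| ≤ MC x N1 N2 N hN (y1, y2) := by
      rw [abs_sub_comm, ← hjx]; exact hb j hj1
    have h3 : |m - w| ≤ MC x N1 N2 N hN (y1, y2) := by
      refine (hts y1 hy1).trans ?_
      rw [← hjx]; exact hb j hj1
    have t1 : |x i - w| ≤ |x i - m| + |m - w| := abs_sub_le _ _ _
    have t2 : |x i - m| ≤ |x i - y1| + |y1 - m| := abs_sub_le _ _ _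
    linarith
  rw [mechOutput, if_pos hcards, condMedian]
  by_cases hcase : (N1 ∩ N2).card ≤ (N1 \ N2).card
  · rw [if_pos hcase]
    have hSne : (N1 \ N2).Nonempty := by
      rw [Finset.nonempty_iff_ne_empty]
      intro h
      have hsub : N1 ⊆ N2 := Finset.sdiff_eq_empty_iff_subset.mp h
      have : N1 ∩ N2 = N1 := Finset.inter_eq_left.mpr hsub
      rw [h, this, Finset.card_empty] at hcase
      exact h1.ne_empty (Finset.card_eq_zero.mp (Nat.le_zero.mp hcase))
    exact main _ hSne (fun j hj => (Finset.mem_sdiff.mp hj).1)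
  · rw [if_neg hcase]
    have hSne : (N1 ∩ N2).Nonempty := by
      rw [← Finset.card_pos]; omega
    exact main _ hSne (fun j hj => (Finset.mem_inter.mp hj).1)
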